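/- For a phase-space point z = (q, p) ∈ ℝ^{2n}, the corank of dF(z), i.e. n − rank(dF(z)), equals n − 1 if and only if q_1 = q_2 = ⋯ = q_n and p_1 = p_2 = ⋯ = p_n. (Thus the corank-(n−1) singular set of the Toda chain is exactly the set of relative equilibria with equal positions and equal momenta.) -/

import Mathlib

open Matrix BigOperators

noncomputable def bfun {n : ℕ} [NeZero n] (z : (Fin n → ℝ) × (Fin n → ℝ)) (j : Fin n) : ℝ :=
  Real.exp ((z.1 j - z.1 (j + 1)) / 2)

/-- The Lax matrix `L`. -/
noncomputable def Lax {n : ℕ} [NeZero n] (z : (Fin n → ℝ) × (Fin n → ℝ)) :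
    Matrix (Fin n) (Fin n) ℝ := fun r s =>
  (if r = s then z.2 r else 0) + (if r + 1 = s then bfun z r else 0) +
    (if s + 1 = r then bfun z s else 0)

/-- The sign `σ_r`, equal to `-1` for the index corresponding to `b_n`. -/
noncomputable def sgn {n : ℕ} [NeZero n] (j : Fin n) : ℝ := if j + 1 = 0 then -1 else 1

/-- The Lax matrix `L̄` obtained from `L` by `b_n ↦ -b_n`. -/
noncomputable def LaxBar {n : ℕ} [NeZero n] (z : (Fin n → ℝ) × (Fin n → ℝ)) :
    Matrix (Fin n) (Fin n) ℝ := fun r s =>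
  (if r = s then z.2 r else 0) + (if r + 1 = s then sgn r * bfun z r else 0) +
    (if s + 1 = r then sgn s * bfun z s else 0)

/-- The canonical Poisson bracket on `ℝ^{2n}`. -/
noncomputable def pb {n : ℕ} (f g : (Fin n → ℝ) × (Fin n → ℝ) → ℝ)
    (z : (Fin n → ℝ) × (Fin n → ℝ)) : ℝ :=
  ∑ j : Fin n,
    (fderiv ℝ f z (Pi.single j 1, 0) * fderiv ℝ g z (0, Pi.single j 1) -
     fderiv ℝ f z (0, Pi.single j 1) * fderiv ℝ g z (Pi.single j 1, 0))

/-- The integrals of motion `F_j = (1/j) Tr L^j`. -/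
noncomputable def F {n : ℕ} [NeZero n] (j : ℕ) (z : (Fin n → ℝ) × (Fin n → ℝ)) : ℝ :=
  (1 / j : ℝ) * (Lax z ^ j).trace

/-- The map `F = (F_1, …, F_n) : ℝ^{2n} → ℝ^n`. -/
noncomputable def Fvec {n : ℕ} [NeZero n] (z : (Fin n → ℝ) × (Fin n → ℝ)) : Fin n → ℝ :=
  fun j => F (j.val + 1) z

/-- The corank of `dF(z)`. -/
noncomputable def corank (n : ℕ) [NeZero n] (z : (Fin n → ℝ) × (Fin n → ℝ)) : ℕ :=
  n - Module.finrank ℝ (LinearMap.range (fderiv ℝ (Fvec (n := n)) z).toLinearMap)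

/-- Number of (real) eigenvalues of `A` with two-dimensional eigenspace. -/
noncomputable def nuCount {n : ℕ} (A : Matrix (Fin n) (Fin n) ℝ) : ℕ :=
  {μ : ℝ | Module.finrank ℝ (LinearMap.ker (Matrix.toLin' (A - μ • 1))) = 2}.ncard

set_option linter.unusedSectionVars false
set_option linter.unusedVariables false

section Aux
variable {n : ℕ} [NeZero n]

abbrev EE (n : ℕ) : Type := (Fin n → ℝ) × (Fin n → ℝ)

noncomputable def Pq (j : Fin n) : EE n →L[ℝ] ℝ :=
  (ContinuousLinearMap.proj j).comp (ContinuousLinearMap.fst ℝ (Fin n → ℝ) (Fin n → ℝ))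
noncomputable def Pp (j : Fin n) : EE n →L[ℝ] ℝ :=
  (ContinuousLinearMap.proj j).comp (ContinuousLinearMap.snd ℝ (Fin n → ℝ) (Fin n → ℝ))

@[simp] lemma Pq_apply (j : Fin n) (v : EE n) : Pq j v = v.1 j := rfl
@[simp] lemma Pp_apply (j : Fin n) (v : EE n) : Pp j v = v.2 j := rfl

noncomputable def ell (j : Fin n) : EE n →L[ℝ] ℝ := (1/2 : ℝ) • (Pq j - Pq (j+1))

@[simp] lemma ell_apply (j : Fin n) (v : EE n) : ell j v = (v.1 j - v.1 (j+1)) / 2 := by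
  simp [ell]; ring

lemma hasFDerivAt_bfun (j : Fin n) (z : EE n) :
    HasFDerivAt (fun z : EE n => bfun z j) (bfun z j • ell j) z := by
  have hfun : (fun z : EE n => (z.1 j - z.1 (j+1)) / 2) = fun z => ell j z :=
    funext fun z => (ell_apply j z).symm
  have h : HasFDerivAt (fun z : EE n => (z.1 j - z.1 (j+1)) / 2) (ell j) z := by
    rw [hfun]; exact (ell j).hasFDerivAt
  have := h.exp
  simpa [bfun] using this

noncomputable def Dent (z : EE n) (r s : Fin n) : EE n →L[ℝ] ℝ :=
  (if r = s then Pp r else 0) + (if r + 1 = s then bfun z r • ell r else 0) +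
    (if s + 1 = r then bfun z s • ell s else 0)

lemma hasFDerivAt_lax_entry (z : EE n) (r s : Fin n) :
    HasFDerivAt (fun z : EE n => Lax z r s) (Dent z r s) z := by
  have h1 : HasFDerivAt (fun z : EE n => if r = s then z.2 r else 0)
      (if r = s then Pp r else 0) z := by
    by_cases h : r = s <;> simp only [h, if_true, if_false]
    · exact (Pp s).hasFDerivAt
    · exact hasFDerivAt_const 0 z
  have h2 : HasFDerivAt (fun z : EE n => if r + 1 = s then bfun z r else 0)
      (if r + 1 = s then bfun z r • ell r else 0) z := by
    by_cases h : r + 1 = s <;> simp only [h, if_true, if_false]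
    · exact hasFDerivAt_bfun r z
    · exact hasFDerivAt_const 0 z
  have h3 : HasFDerivAt (fun z : EE n => if s + 1 = r then bfun z s else 0)
      (if s + 1 = r then bfun z s • ell s else 0) z := by
    by_cases h : s + 1 = r <;> simp only [h, if_true, if_false]
    · exact hasFDerivAt_bfun s z
    · exact hasFDerivAt_const 0 z
  exact ((h1.add h2).add h3 : _)

lemma diff_lax_entry (r s : Fin n) : Differentiable ℝ (fun z : EE n => Lax z r s) :=
  fun z => (hasFDerivAt_lax_entry z r s).differentiableAt

lemma diff_pow_entry (k : ℕ) (r s : Fin n) :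
    Differentiable ℝ (fun z : EE n => (Lax z ^ k) r s) := by
  induction k generalizing r s with
  | zero => simp only [pow_zero]; exact differentiable_const _
  | succ k ih =>
    have he : (fun z : EE n => (Lax z ^ (k+1)) r s)
        = fun z => ∑ t, (Lax z ^ k) r t * Lax z t s := by
      funext z; rw [pow_succ, Matrix.mul_apply]
    rw [he]
    exact Differentiable.fun_sum fun t _ => (ih r t).mul (diff_lax_entry t s)

lemma diff_F (k : ℕ) : Differentiable ℝ (F k : EE n → ℝ) := by
  have he : (F k : EE n → ℝ) = fun z => (1 / k : ℝ) * ∑ r, (Lax z ^ k) r r := by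
    funext z; rw [F, Matrix.trace]; rfl
  rw [he]
  exact Differentiable.const_mul (Differentiable.fun_sum fun r _ => diff_pow_entry k r r) _

end Aux

section Aux2
variable {n : ℕ} [NeZero n]

lemma one_ne_zero_fin (hn : 2 ≤ n) : (1 : Fin n) ≠ 0 := by
  intro hh
  have h1 : (1 : Fin n).val = (0 : Fin n).val := congrArg Fin.val hh
  have h0 : (0 : Fin n).val = 0 := rfl
  rw [Fin.val_one', h0, Nat.mod_eq_of_lt (by omega)] at h1
  omega

lemma succ_ne (hn : 2 ≤ n) (r : Fin n) : r + 1 ≠ r := by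
  intro h
  rw [add_eq_left] at h
  exact one_ne_zero_fin hn h

lemma lax_diag (hn : 2 ≤ n) (z : EE n) (i : Fin n) : Lax z i i = z.2 i := by
  simp [Lax, succ_ne hn i]

lemma lax_symm (z : EE n) (r s : Fin n) : Lax z r s = Lax z s r := by
  rcases eq_or_ne r s with rfl | h
  · rfl
  · unfold Lax
    rw [if_neg h, if_neg (Ne.symm h), zero_add, zero_add, add_comm]

lemma dent_symm (z : EE n) (r s : Fin n) : Dent z r s = Dent z s r := by
  rcases eq_or_ne r s with rfl | h
  · rfl
  · unfold Dent
    rw [if_neg h, if_neg (Ne.symm h), zero_add, zero_add, add_comm]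

noncomputable def sumP : EE n →L[ℝ] ℝ := ∑ j, Pp j

@[simp] lemma sumP_apply (v : EE n) : sumP v = ∑ j, v.2 j := by
  simp [sumP]

lemma F1_eq (hn : 2 ≤ n) (z : EE n) : F 1 z = ∑ r, z.2 r := by
  have : ∀ r : Fin n, (Lax z ^ 1) r r = z.2 r := by
    intro r; rw [pow_one]; exact lax_diag hn z r
  rw [F, Matrix.trace]
  simp [Matrix.diag, this]

lemma hasFDerivAt_F1 (hn : 2 ≤ n) (z : EE n) :
    HasFDerivAt (F 1 : EE n → ℝ) (sumP : EE n →L[ℝ] ℝ) z := by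
  have he : (F 1 : EE n → ℝ) = fun z => sumP z := by
    funext w; rw [F1_eq hn w]; simp
  rw [he]
  exact sumP.hasFDerivAt

noncomputable def E2 (z : EE n) : EE n →L[ℝ] ℝ := ∑ r, ∑ s, Lax z r s • Dent z r s

lemma F2_eq (z : EE n) : F 2 z = (1/2 : ℝ) * ∑ r, ∑ s, Lax z r s * Lax z s r := by
  rw [F, Matrix.trace]
  norm_num [Matrix.diag, pow_two, Matrix.mul_apply]

lemma hasFDerivAt_F2 (z : EE n) : HasFDerivAt (F 2 : EE n → ℝ) (E2 z) z := by
  have he : (F 2 : EE n → ℝ) = fun z => (1/2 : ℝ) * ∑ r, ∑ s, Lax z r s * Lax z s r :=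
    funext F2_eq
  rw [he]
  have h : HasFDerivAt (fun z : EE n => (1/2:ℝ) * ∑ r, ∑ s, Lax z r s * Lax z s r)
      ((1/2:ℝ) • ∑ r : Fin n, ∑ s : Fin n,
        (Lax z r s • Dent z s r + Lax z s r • Dent z r s)) z := by
    apply HasFDerivAt.const_mul
    apply HasFDerivAt.fun_sum; intro r _
    apply HasFDerivAt.fun_sum; intro s _
    exact (hasFDerivAt_lax_entry z r s).mul (hasFDerivAt_lax_entry z s r)
  convert h using 1
  have hterm : ∀ r s : Fin n, Lax z r s • Dent z s r + Lax z s r • Dent z r s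
      = Lax z r s • Dent z r s + Lax z r s • Dent z r s := by
    intro r s
    rw [dent_symm z s r, lax_symm z s r]
  have hsum : (∑ r : Fin n, ∑ s : Fin n,
      (Lax z r s • Dent z s r + Lax z s r • Dent z r s)) = E2 z + E2 z := by
    rw [E2, ← Finset.sum_add_distrib]
    refine Finset.sum_congr rfl fun r _ => ?_
    rw [← Finset.sum_add_distrib]
    exact Finset.sum_congr rfl fun s _ => hterm r s
  rw [hsum]
  module

end Aux2

section Aux3
variable {n : ℕ} [NeZero n]

lemma dent_apply (z : EE n) (r s : Fin n) (v : EE n) :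
    Dent z r s v = (if r = s then v.2 r else 0)
      + (if r + 1 = s then bfun z r * ((v.1 r - v.1 (r+1))/2) else 0)
      + (if s + 1 = r then bfun z s * ((v.1 s - v.1 (s+1))/2) else 0) := by
  rw [Dent]
  simp only [ContinuousLinearMap.add_apply,
    apply_ite (fun f : EE n →L[ℝ] ℝ => f v), ContinuousLinearMap.zero_apply,
    ContinuousLinearMap.smul_apply, ell_apply, Pp_apply, smul_eq_mul]

lemma E2_apply (z v : EE n) :
    E2 z v = ∑ r, ∑ s, Lax z r s * Dent z r s v := by
  simp [E2, ContinuousLinearMap.sum_apply, smul_eq_mul]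

lemma E2_p (hn : 2 ≤ n) (z : EE n) (i : Fin n) :
    E2 z ((0 : Fin n → ℝ), (Pi.single i 1 : Fin n → ℝ)) = z.2 i := by
  rw [E2_apply]
  have hD : ∀ r s : Fin n, Dent z r s ((0 : Fin n → ℝ), (Pi.single i 1 : Fin n → ℝ))
      = if r = s then (Pi.single i 1 : Fin n → ℝ) r else 0 := by
    intro r s
    rw [dent_apply]
    simp
  calc ∑ r, ∑ s, Lax z r s * Dent z r s ((0 : Fin n → ℝ), (Pi.single i 1 : Fin n → ℝ))
      = ∑ r : Fin n, ∑ s : Fin n, if r = s then Lax z r s * (Pi.single i 1 : Fin n → ℝ) r else 0 := by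
        refine Finset.sum_congr rfl fun r _ => Finset.sum_congr rfl fun s _ => ?_
        rw [hD, mul_ite, mul_zero]
    _ = ∑ r : Fin n, Lax z r r * (Pi.single i 1 : Fin n → ℝ) r := by
        refine Finset.sum_congr rfl fun r _ => ?_
        rw [Finset.sum_ite_eq]
        simp
    _ = ∑ r : Fin n, if r = i then Lax z r r * 1 else 0 := by
        refine Finset.sum_congr rfl fun r _ => ?_
        rw [Pi.single_apply, mul_ite, mul_zero]
    _ = Lax z i i * 1 := by rw [Finset.sum_ite_eq']; simp
    _ = z.2 i := by rw [lax_diag hn, mul_one]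

/-- The quantity `G_r = L_{r,r+1} b_r`. -/
noncomputable def Gq (z : EE n) (r : Fin n) : ℝ := Lax z r (r+1) * bfun z r

lemma E2_q (z : EE n) (i : Fin n) :
    E2 z ((Pi.single i 1 : Fin n → ℝ), (0 : Fin n → ℝ)) = Gq z i - Gq z (i - 1) := by
  rw [E2_apply]
  have hD : ∀ r s : Fin n, Dent z r s ((Pi.single i 1 : Fin n → ℝ), (0 : Fin n → ℝ))
      = (if r + 1 = s then bfun z r * (((Pi.single i 1 : Fin n → ℝ) r - (Pi.single i 1 : Fin n → ℝ) (r+1))/2) else 0)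
        + (if s + 1 = r then bfun z s * (((Pi.single i 1 : Fin n → ℝ) s - (Pi.single i 1 : Fin n → ℝ) (s+1))/2) else 0) := by
    intro r s
    rw [dent_apply]
    simp
  have hsplit : ∀ r s : Fin n, Lax z r s * Dent z r s ((Pi.single i 1 : Fin n → ℝ), (0 : Fin n → ℝ))
      = (if r + 1 = s then Lax z r s * (bfun z r * (((Pi.single i 1 : Fin n → ℝ) r - (Pi.single i 1 : Fin n → ℝ) (r+1))/2)) else 0)
        + (if s + 1 = r then Lax z r s * (bfun z s * (((Pi.single i 1 : Fin n → ℝ) s - (Pi.single i 1 : Fin n → ℝ) (s+1))/2)) else 0) := by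
    intro r s
    rw [hD, mul_add, mul_ite, mul_zero, mul_ite, mul_zero]
  have hone : (∑ r : Fin n, ∑ s : Fin n,
      if r + 1 = s then Lax z r s * (bfun z r * (((Pi.single i 1 : Fin n → ℝ) r - (Pi.single i 1 : Fin n → ℝ) (r+1))/2)) else 0)
      = ∑ r : Fin n, Lax z r (r+1) * (bfun z r * (((Pi.single i 1 : Fin n → ℝ) r - (Pi.single i 1 : Fin n → ℝ) (r+1))/2)) := by
    refine Finset.sum_congr rfl fun r _ => ?_
    rw [Finset.sum_ite_eq]
    simp
  have htwo : (∑ r : Fin n, ∑ s : Fin n,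
      if s + 1 = r then Lax z r s * (bfun z s * (((Pi.single i 1 : Fin n → ℝ) s - (Pi.single i 1 : Fin n → ℝ) (s+1))/2)) else 0)
      = ∑ s : Fin n, Lax z s (s+1) * (bfun z s * (((Pi.single i 1 : Fin n → ℝ) s - (Pi.single i 1 : Fin n → ℝ) (s+1))/2)) := by
    rw [Finset.sum_comm]
    refine Finset.sum_congr rfl fun s _ => ?_
    rw [Finset.sum_ite_eq]
    simp [lax_symm z (s+1) s]
  calc ∑ r, ∑ s, Lax z r s * Dent z r s ((Pi.single i 1 : Fin n → ℝ), (0 : Fin n → ℝ))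
      = (∑ r : Fin n, ∑ s : Fin n,
          if r + 1 = s then Lax z r s * (bfun z r * (((Pi.single i 1 : Fin n → ℝ) r - (Pi.single i 1 : Fin n → ℝ) (r+1))/2)) else 0)
        + ∑ r : Fin n, ∑ s : Fin n,
          if s + 1 = r then Lax z r s * (bfun z s * (((Pi.single i 1 : Fin n → ℝ) s - (Pi.single i 1 : Fin n → ℝ) (s+1))/2)) else 0 := by
        rw [← Finset.sum_add_distrib]
        refine Finset.sum_congr rfl fun r _ => ?_
        rw [← Finset.sum_add_distrib]
        exact Finset.sum_congr rfl fun s _ => hsplit r s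
    _ = (∑ r : Fin n, Lax z r (r+1) * (bfun z r * (((Pi.single i 1 : Fin n → ℝ) r - (Pi.single i 1 : Fin n → ℝ) (r+1))/2)))
        + ∑ s : Fin n, Lax z s (s+1) * (bfun z s * (((Pi.single i 1 : Fin n → ℝ) s - (Pi.single i 1 : Fin n → ℝ) (s+1))/2)) := by
        rw [hone, htwo]
    _ = ∑ r : Fin n, Gq z r * ((Pi.single i 1 : Fin n → ℝ) r - (Pi.single i 1 : Fin n → ℝ) (r+1)) := by
        rw [← Finset.sum_add_distrib]
        refine Finset.sum_congr rfl fun r _ => ?_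
        rw [Gq]; ring
    _ = ∑ r : Fin n, ((if r = i then Gq z r else 0) - if r = i - 1 then Gq z r else 0) := by
        refine Finset.sum_congr rfl fun r _ => ?_
        have hcond : (if r + 1 = i then Gq z r else 0) = (if r = i - 1 then Gq z r else 0) :=
          if_congr (by rw [eq_sub_iff_add_eq]) rfl rfl
        rw [← hcond, Pi.single_apply, Pi.single_apply]
        split_ifs <;> ring
    _ = Gq z i - Gq z (i - 1) := by
        rw [Finset.sum_sub_distrib, Finset.sum_ite_eq', Finset.sum_ite_eq']
        simp
end Aux3

section Aux4
variable {n : ℕ} [NeZero n]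

lemma lax_offdiag (hn : 2 ≤ n) (z : EE n) (j : Fin n) :
    Lax z j (j+1) = bfun z j + (if j + 1 + 1 = j then bfun z (j+1) else 0) := by
  unfold Lax
  rw [if_neg (Ne.symm (succ_ne hn j)), if_pos rfl, zero_add]

lemma key_ident (hn : 2 ≤ n) (z : EE n) (j : Fin n) :
    Gq z j - Gq z (j+1) = (bfun z j)^2 - (bfun z (j+1))^2 := by
  rw [Gq, Gq, lax_offdiag hn z j, lax_offdiag hn z (j+1)]
  have hcond : (j + 1 + 1 + 1 = j + 1) ↔ (j + 1 + 1 = j) := by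
    constructor
    · intro h; exact add_right_cancel h
    · intro h; rw [h]
  by_cases h2 : j + 1 + 1 = j
  · rw [if_pos h2, if_pos (hcond.mpr h2), h2]
    ring
  · rw [if_neg h2, if_neg (fun h => h2 (hcond.mp h))]
    ring

open Fin.NatCast in
lemma step_const {α : Type*} (hn : 2 ≤ n) (f : Fin n → α) (h : ∀ j, f (j+1) = f j) :
    ∀ i, f i = f 0 := by
  have key : ∀ m : ℕ, f ((m : ℕ) : Fin n) = f 0 := by
    intro m
    induction m with
    | zero => norm_num
    | succ m ih =>
      have hc : ((m+1 : ℕ) : Fin n) = ((m : ℕ) : Fin n) + 1 := by push_cast; ring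
      rw [hc, h, ih]
  intro i
  have := key i.val
  rwa [Fin.cast_val_eq_self] at this

lemma bfun_pos (z : EE n) (j : Fin n) : 0 < bfun z j := Real.exp_pos _

/-- From `Gq` having equal consecutive values, consecutive `bfun` agree. -/
lemma bfun_eq_of_Gq (hn : 2 ≤ n) (z : EE n) (hG : ∀ j : Fin n, Gq z (j+1) = Gq z j)
    (j : Fin n) : bfun z (j+1) = bfun z j := by
  have h := key_ident hn z j
  rw [hG j, sub_self] at h
  have h' : (bfun z j - bfun z (j+1)) * (bfun z j + bfun z (j+1)) = 0 := by
    have := h.symm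
    nlinarith [this]
  rcases mul_eq_zero.mp h' with h'' | h''
  · linarith [sub_eq_zero.mp h'']
  · exfalso; linarith [bfun_pos z j, bfun_pos z (j+1)]

/-- From all `bfun` equal consecutively, all coordinates of `q` are equal. -/
lemma q_const_of_bfun (hn : 2 ≤ n) (z : EE n)
    (hb : ∀ j : Fin n, bfun z (j+1) = bfun z j) : ∀ i j : Fin n, z.1 i = z.1 j := by
  set d : Fin n → ℝ := fun j => z.1 j - z.1 (j+1) with hd
  have hstep : ∀ j, d (j+1) = d j := by
    intro j
    have := hb j
    rw [bfun, bfun, Real.exp_eq_exp] at this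
    simp only [hd]
    linarith
  have hconst : ∀ j, d j = d 0 := step_const hn d hstep
  have hsum : ∑ j : Fin n, d j = 0 := by
    have hbij : ∑ j : Fin n, z.1 (j+1) = ∑ j : Fin n, z.1 j :=
      Fintype.sum_equiv (Equiv.addRight (1 : Fin n)) _ _ (fun j => rfl)
    simp only [hd]
    rw [Finset.sum_sub_distrib, hbij, sub_self]
  have hn0 : d 0 = 0 := by
    rw [Finset.sum_congr rfl (fun j _ => hconst j), Finset.sum_const] at hsum
    have hcard : (Finset.univ : Finset (Fin n)).card = n := by simp
    rw [hcard] at hsum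
    have hnn : (n : ℝ) ≠ 0 := Nat.cast_ne_zero.mpr (NeZero.ne n)
    have : (n : ℝ) * d 0 = 0 := by rw [← hsum]; simp [nsmul_eq_mul]
    exact (mul_eq_zero.mp this).resolve_left hnn
  have hqstep : ∀ j : Fin n, z.1 (j+1) = z.1 j := by
    intro j
    have : d j = 0 := by rw [hconst j, hn0]
    simp only [hd] at this
    linarith
  intro i j
  rw [step_const hn z.1 hqstep i, step_const hn z.1 hqstep j]

end Aux4

noncomputable def Fvec' {n : ℕ} [NeZero n] (z : (Fin n → ℝ) × (Fin n → ℝ)) : Fin n → ℝ :=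
  fun j => F (j.val + 1) z

section Aux5
variable {n : ℕ} [NeZero n]

lemma dep_of_rank_le_one {W : Submodule ℝ (Fin n → ℝ)} (hW : Module.finrank ℝ W ≤ 1)
    {x y : Fin n → ℝ} (hx : x ∈ W) (hy : y ∈ W) (hx0 : x 0 ≠ 0) (hy0 : y 0 = 0) : y = 0 := by
  by_contra hy'
  have hli : LinearIndependent ℝ ![x, y] := by
    rw [LinearIndependent.pair_iff]
    intro s t hst
    have h0 := congrFun hst 0
    simp only [Pi.add_apply, Pi.smul_apply, smul_eq_mul, Pi.zero_apply, hy0, mul_zero,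
      add_zero] at h0
    have hs : s = 0 := (mul_eq_zero.mp h0).resolve_right hx0
    refine ⟨hs, ?_⟩
    rw [hs, zero_smul, zero_add] at hst
    by_contra ht
    exact hy' ((smul_eq_zero.mp hst).resolve_left ht)
  have hsub : Submodule.span ℝ (Set.range ![x, y]) ≤ W := by
    rw [Submodule.span_le]
    rintro v ⟨k, rfl⟩
    fin_cases k
    · simpa using hx
    · simpa using hy
  have h2 : Module.finrank ℝ (Submodule.span ℝ (Set.range ![x, y])) = 2 := by
    rw [finrank_span_eq_card hli]; simp
  have hmono := Submodule.finrank_mono (R := ℝ) hsub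
  omega

lemma fderiv_Fvec' (z : EE n) : fderiv ℝ (Fvec' (n := n)) z
    = ContinuousLinearMap.pi (fun j : Fin n => fderiv ℝ (F (j.val + 1)) z) := by
  have : (Fvec' (n := n)) = fun z (j : Fin n) => F (j.val + 1) z := rfl
  rw [this]
  exact fderiv_pi fun j => (diff_F (j.val + 1)) z

lemma fderiv_Fvec'_apply (z v : EE n) (j : Fin n) :
    fderiv ℝ (Fvec' (n := n)) z v j = fderiv ℝ (F (j.val + 1)) z v := by
  rw [fderiv_Fvec']; rfl

lemma sum_single_one (i : Fin n) : ∑ k : Fin n, (Pi.single i 1 : Fin n → ℝ) k = 1 := by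
  simp [Pi.single_apply]

lemma forward_dir (hn : 2 ≤ n) (z : EE n)
    (hr : Module.finrank ℝ (LinearMap.range (fderiv ℝ (Fvec' (n := n)) z).toLinearMap) = 1) :
    (∀ i j : Fin n, z.1 i = z.1 j) ∧ (∀ i j : Fin n, z.2 i = z.2 j) := by
  have hF1 : fderiv ℝ (F 1 : EE n → ℝ) z = sumP := (hasFDerivAt_F1 hn z).fderiv
  have hF2 : fderiv ℝ (F 2 : EE n → ℝ) z = E2 z := (hasFDerivAt_F2 z).fderiv
  set W := LinearMap.range (fderiv ℝ (Fvec' (n := n)) z).toLinearMap with hW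
  have hzero : ((0 : Fin n)).val + 1 = 1 := rfl
  set j1 : Fin n := ⟨1, lt_of_lt_of_le one_lt_two hn⟩ with hj1
  have hone : (j1).val + 1 = 2 := rfl
  -- the element with nonzero 0-th coordinate
  have hx0 : (fderiv ℝ (Fvec' (n := n)) z ((0 : Fin n → ℝ), fun _ => (1:ℝ))) 0 = n := by
    rw [fderiv_Fvec'_apply, hzero, hF1, sumP_apply]
    simp
  have hker : ∀ v : EE n, sumP v = 0 → fderiv ℝ (Fvec' (n := n)) z v = 0 := by
    intro v hv
    refine dep_of_rank_le_one (W := W) (le_of_eq hr)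
      (x := fderiv ℝ (Fvec' (n := n)) z ((0 : Fin n → ℝ), fun _ => (1:ℝ)))
      ⟨_, rfl⟩ ⟨_, rfl⟩ ?_ ?_
    · rw [hx0]
      exact_mod_cast Nat.cast_ne_zero.mpr (by omega)
    · rw [fderiv_Fvec'_apply, hzero, hF1, hv]
  constructor
  · -- positions
    have hG : ∀ j : Fin n, Gq z (j + 1) = Gq z j := by
      intro j
      have hv : sumP ((Pi.single (j+1) 1 : Fin n → ℝ), (0 : Fin n → ℝ)) = 0 := by
        rw [sumP_apply]; simp
      have h0 := congrFun (hker _ hv) j1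
      rw [fderiv_Fvec'_apply, hone, hF2, E2_q] at h0
      have hsub : (j + 1) - 1 = j := add_sub_cancel_right j 1
      rw [hsub] at h0
      have : Gq z (j+1) - Gq z j = 0 := h0
      linarith
    exact q_const_of_bfun hn z (bfun_eq_of_Gq hn z hG)
  · -- momenta
    intro i j
    have hv : sumP ((0 : Fin n → ℝ), (Pi.single i 1 - Pi.single j 1 : Fin n → ℝ)) = 0 := by
      rw [sumP_apply]
      simp only [Pi.sub_apply]
      rw [Finset.sum_sub_distrib, _root_.sum_single_one, _root_.sum_single_one, sub_self]
    have h0 := congrFun (hker _ hv) j1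
    rw [fderiv_Fvec'_apply, hone, hF2] at h0
    have hsplit : ((0 : Fin n → ℝ), (Pi.single i 1 - Pi.single j 1 : Fin n → ℝ))
        = ((0 : Fin n → ℝ), (Pi.single i 1 : Fin n → ℝ))
          - ((0 : Fin n → ℝ), (Pi.single j 1 : Fin n → ℝ)) := by
      apply Prod.ext <;> simp
    rw [hsplit, map_sub, E2_p hn, E2_p hn] at h0
    simp only [Pi.zero_apply] at h0
    linarith

end Aux5

section Aux6
variable {n : ℕ} [NeZero n]

/-- The cyclic shift as a continuous linear map. -/
noncomputable def Sh : EE n →L[ℝ] EE n :=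
  (ContinuousLinearMap.pi fun j : Fin n => Pq (j+1)).prod
    (ContinuousLinearMap.pi fun j : Fin n => Pp (j+1))

@[simp] lemma Sh_apply (w : EE n) :
    Sh w = ((fun j => w.1 (j+1)), (fun j => w.2 (j+1))) := rfl

lemma bfun_shift (w : EE n) (j : Fin n) : bfun (Sh w) j = bfun w (j+1) := rfl

lemma lax_shift (w : EE n) :
    Lax (Sh w) = (Lax w).submatrix (⇑(Equiv.addRight (1 : Fin n))) (⇑(Equiv.addRight (1 : Fin n))) := by
  ext r s
  have c1 : (r = s) = (r + 1 = s + 1) := propext (add_left_inj 1).symm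
  have c2 : (r + 1 = s) = (r + 1 + 1 = s + 1) := propext (add_left_inj 1).symm
  have c3 : (s + 1 = r) = (s + 1 + 1 = r + 1) := propext (add_left_inj 1).symm
  show (if r = s then (Sh w).2 r else 0) + (if r + 1 = s then bfun (Sh w) r else 0)
      + (if s + 1 = r then bfun (Sh w) s else 0)
    = (if r + 1 = s + 1 then w.2 (r+1) else 0) + (if r + 1 + 1 = s + 1 then bfun w (r+1) else 0)
      + (if s + 1 + 1 = r + 1 then bfun w (s+1) else 0)
  rw [bfun_shift, bfun_shift]
  congr 1
  · congr 1
    · exact if_congr (add_left_inj 1).symm rfl rfl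
    · exact if_congr (add_left_inj 1).symm rfl rfl
  · exact if_congr (add_left_inj 1).symm rfl rfl

lemma trace_pow_submatrix (k : ℕ) (A : Matrix (Fin n) (Fin n) ℝ) (e : Fin n ≃ Fin n) :
    ((A.submatrix ⇑e ⇑e) ^ k).trace = (A ^ k).trace := by
  have hpow : (A.submatrix ⇑e ⇑e) ^ k = (A ^ k).submatrix ⇑e ⇑e := by
    induction k with
    | zero => rw [pow_zero, pow_zero, Matrix.submatrix_one_equiv]
    | succ k ih => rw [pow_succ, pow_succ, ih, Matrix.submatrix_mul_equiv]
  rw [hpow, Matrix.trace, Matrix.trace]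
  simp only [Matrix.diag, Matrix.submatrix_apply]
  exact Equiv.sum_comp e fun i => (A ^ k) i i

lemma F_shift (k : ℕ) (w : EE n) : F k (Sh w) = F k w := by
  rw [F, F, lax_shift, trace_pow_submatrix]

/-- The direction of uniform translation in `q`. -/
noncomputable def vone : EE n := ((fun _ => (1:ℝ)), (0 : Fin n → ℝ))

lemma lax_translate (w : EE n) (t : ℝ) : Lax (w + t • (vone (n := n))) = Lax w := by
  have hb : ∀ j, bfun (w + t • (vone (n := n))) j = bfun w j := by
    intro j
    rw [bfun, bfun]
    congr 1
    show ((w.1 j + t * 1) - (w.1 (j+1) + t * 1)) / 2 = (w.1 j - w.1 (j+1)) / 2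
    ring
  have hp : ∀ r, (w + t • (vone (n := n))).2 r = w.2 r := by
    intro r
    show w.2 r + t * 0 = w.2 r
    ring
  ext r s
  show (if r = s then (w + t • (vone (n := n))).2 r else 0)
      + (if r + 1 = s then bfun (w + t • (vone (n := n))) r else 0)
      + (if s + 1 = r then bfun (w + t • (vone (n := n))) s else 0)
    = (if r = s then w.2 r else 0) + (if r + 1 = s then bfun w r else 0)
      + (if s + 1 = r then bfun w s else 0)
  rw [hb, hb, hp]

lemma F_translate (k : ℕ) (w : EE n) (t : ℝ) : F k (w + t • (vone (n := n))) = F k w := by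
  rw [F, F, lax_translate]

lemma backward_dir (hn : 2 ≤ n) (z : EE n)
    (hq : ∀ i j : Fin n, z.1 i = z.1 j) (hp : ∀ i j : Fin n, z.2 i = z.2 j) :
    Module.finrank ℝ (LinearMap.range (fderiv ℝ (Fvec' (n := n)) z).toLinearMap) = 1 := by
  have hSz : Sh z = z := by
    refine Prod.ext ?_ ?_
    · exact funext fun j => hq (j+1) j
    · exact funext fun j => hp (j+1) j
  -- invariance of the differential under the shift
  have hφS : ∀ (k : ℕ) (v : EE n),
      fderiv ℝ (F k : EE n → ℝ) z (Sh v) = fderiv ℝ (F k : EE n → ℝ) z v := by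
    intro k v
    have hd : HasFDerivAt (F k : EE n → ℝ) (fderiv ℝ (F k) z) (Sh z) := by
      rw [hSz]; exact (diff_F k z).hasFDerivAt
    have hcomp : HasFDerivAt ((F k : EE n → ℝ) ∘ Sh)
        ((fderiv ℝ (F k) z).comp (Sh : EE n →L[ℝ] EE n)) z := hd.comp z Sh.hasFDerivAt
    have heq : (F k : EE n → ℝ) ∘ (Sh : EE n →L[ℝ] EE n) = F k := funext fun w => F_shift k w
    rw [heq] at hcomp
    have huniq := hcomp.unique (diff_F k z).hasFDerivAt
    calc fderiv ℝ (F k) z (Sh v)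
        = ((fderiv ℝ (F k) z).comp (Sh : EE n →L[ℝ] EE n)) v := rfl
      _ = fderiv ℝ (F k) z v := by rw [huniq]
  -- invariance under translation
  have hφt : ∀ k : ℕ, fderiv ℝ (F k : EE n → ℝ) z (vone (n := n)) = 0 := by
    intro k
    have hline : HasDerivAt (fun t : ℝ => z + t • (vone (n := n))) (vone (n := n)) 0 := by
      have h := ((hasDerivAt_id (0:ℝ)).smul_const (vone (n := n))).const_add z
      simpa using h
    have hfd : HasFDerivAt (F k : EE n → ℝ)
        (fderiv ℝ (F k) (z + (0:ℝ) • (vone (n := n)))) (z + (0:ℝ) • (vone (n := n))) :=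
      (diff_F k _).hasFDerivAt
    have hcomp := hfd.comp_hasDerivAt 0 hline
    have hz0 : z + (0:ℝ) • (vone (n := n)) = z := by simp
    rw [hz0] at hcomp
    have hconstf : (F k : EE n → ℝ) ∘ (fun t : ℝ => z + t • (vone (n := n)))
        = fun _ => F k z := funext fun t => F_translate k z t
    rw [hconstf] at hcomp
    exact hcomp.unique (hasDerivAt_const 0 _)
  -- the q-direction values agree, and p-direction values agree
  have hstepQ : ∀ (k : ℕ) (j : Fin n),
      fderiv ℝ (F k : EE n → ℝ) z ((Pi.single j 1 : Fin n → ℝ), (0 : Fin n → ℝ))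
      = fderiv ℝ (F k) z ((Pi.single 0 1 : Fin n → ℝ), (0 : Fin n → ℝ)) := by
    intro k
    refine step_const hn _ fun j => ?_
    have hSv : Sh ((Pi.single (j+1) 1 : Fin n → ℝ), (0 : Fin n → ℝ))
        = ((Pi.single j 1 : Fin n → ℝ), (0 : Fin n → ℝ)) := by
      refine Prod.ext ?_ rfl
      funext i
      show (Pi.single (j+1) 1 : Fin n → ℝ) (i+1) = (Pi.single j 1 : Fin n → ℝ) i
      rw [Pi.single_apply, Pi.single_apply]
      exact if_congr (add_left_inj 1) rfl rfl
    have := hφS k ((Pi.single (j+1) 1 : Fin n → ℝ), (0 : Fin n → ℝ))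
    rw [hSv] at this
    exact this.symm
  have hstepP : ∀ (k : ℕ) (j : Fin n),
      fderiv ℝ (F k : EE n → ℝ) z ((0 : Fin n → ℝ), (Pi.single j 1 : Fin n → ℝ))
      = fderiv ℝ (F k) z ((0 : Fin n → ℝ), (Pi.single 0 1 : Fin n → ℝ)) := by
    intro k
    refine step_const hn _ fun j => ?_
    have hSv : Sh ((0 : Fin n → ℝ), (Pi.single (j+1) 1 : Fin n → ℝ))
        = ((0 : Fin n → ℝ), (Pi.single j 1 : Fin n → ℝ)) := by
      refine Prod.ext rfl ?_
      funext i
      show (Pi.single (j+1) 1 : Fin n → ℝ) (i+1) = (Pi.single j 1 : Fin n → ℝ) i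
      rw [Pi.single_apply, Pi.single_apply]
      exact if_congr (add_left_inj 1) rfl rfl
    have := hφS k ((0 : Fin n → ℝ), (Pi.single (j+1) 1 : Fin n → ℝ))
    rw [hSv] at this
    exact this.symm
  -- decomposition of an arbitrary vector
  have hv : ∀ v : EE n, v = (∑ j : Fin n, (v.1 j) • ((Pi.single j 1 : Fin n → ℝ), (0 : Fin n → ℝ)))
      + ∑ j : Fin n, (v.2 j) • ((0 : Fin n → ℝ), (Pi.single j 1 : Fin n → ℝ)) := by
    intro v
    refine Prod.ext ?_ ?_
    · show v.1 = ((∑ j : Fin n, (v.1 j) • ((Pi.single j 1 : Fin n → ℝ), (0 : Fin n → ℝ)))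
        + ∑ j : Fin n, (v.2 j) • ((0 : Fin n → ℝ), (Pi.single j 1 : Fin n → ℝ))).1
      rw [Prod.fst_add, Prod.fst_sum, Prod.fst_sum]
      simp only [Prod.smul_fst, smul_zero, Finset.sum_const_zero, add_zero]
      have : ∀ j : Fin n, (v.1 j) • (Pi.single j 1 : Fin n → ℝ) = Pi.single j (v.1 j) := by
        intro j
        rw [← Pi.single_smul, smul_eq_mul, mul_one]
      rw [Finset.sum_congr rfl fun j _ => this j, Finset.univ_sum_single]
    · show v.2 = ((∑ j : Fin n, (v.1 j) • ((Pi.single j 1 : Fin n → ℝ), (0 : Fin n → ℝ)))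
        + ∑ j : Fin n, (v.2 j) • ((0 : Fin n → ℝ), (Pi.single j 1 : Fin n → ℝ))).2
      rw [Prod.snd_add, Prod.snd_sum, Prod.snd_sum]
      simp only [Prod.smul_snd, smul_zero, Finset.sum_const_zero, zero_add]
      have : ∀ j : Fin n, (v.2 j) • (Pi.single j 1 : Fin n → ℝ) = Pi.single j (v.2 j) := by
        intro j
        rw [← Pi.single_smul, smul_eq_mul, mul_one]
      rw [Finset.sum_congr rfl fun j _ => this j, Finset.univ_sum_single]
  -- general form of the differential
  have hform0 : ∀ (k : ℕ) (v : EE n), fderiv ℝ (F k : EE n → ℝ) z v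
      = (∑ j : Fin n, v.1 j) * fderiv ℝ (F k) z ((Pi.single 0 1 : Fin n → ℝ), (0 : Fin n → ℝ))
        + (∑ j : Fin n, v.2 j) * fderiv ℝ (F k) z ((0 : Fin n → ℝ), (Pi.single 0 1 : Fin n → ℝ)) := by
    intro k v
    conv_lhs => rw [hv v]
    rw [map_add, map_sum, map_sum]
    rw [Finset.sum_congr rfl (fun j _ => by rw [ContinuousLinearMap.map_smul, smul_eq_mul, hstepQ k j] :
      ∀ j ∈ Finset.univ, fderiv ℝ (F k) z ((v.1 j) • ((Pi.single j 1 : Fin n → ℝ), (0 : Fin n → ℝ)))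
        = v.1 j * fderiv ℝ (F k) z ((Pi.single 0 1 : Fin n → ℝ), (0 : Fin n → ℝ)))]
    rw [Finset.sum_congr rfl (fun j _ => by rw [ContinuousLinearMap.map_smul, smul_eq_mul, hstepP k j] :
      ∀ j ∈ Finset.univ, fderiv ℝ (F k) z ((v.2 j) • ((0 : Fin n → ℝ), (Pi.single j 1 : Fin n → ℝ)))
        = v.2 j * fderiv ℝ (F k) z ((0 : Fin n → ℝ), (Pi.single 0 1 : Fin n → ℝ)))]
    rw [← Finset.sum_mul, ← Finset.sum_mul]
  -- the q-coefficient vanishes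
  have haQ : ∀ k : ℕ, fderiv ℝ (F k : EE n → ℝ) z ((Pi.single 0 1 : Fin n → ℝ), (0 : Fin n → ℝ)) = 0 := by
    intro k
    have h := hφt k
    rw [hform0 k (vone (n := n))] at h
    have h1 : (∑ _j : Fin n, (1:ℝ)) = n := by simp
    have h2 : (∑ j : Fin n, (vone (n := n)).2 j) = 0 := by simp [vone]
    have h3 : (∑ j : Fin n, (vone (n := n)).1 j) = n := by simp [vone]
    rw [h2, h3, zero_mul, add_zero] at h
    have hnn : (n : ℝ) ≠ 0 := Nat.cast_ne_zero.mpr (NeZero.ne n)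
    exact (mul_eq_zero.mp h).resolve_left hnn
  have hform : ∀ (k : ℕ) (v : EE n), fderiv ℝ (F k : EE n → ℝ) z v
      = (∑ j : Fin n, v.2 j) * fderiv ℝ (F k) z ((0 : Fin n → ℝ), (Pi.single 0 1 : Fin n → ℝ)) := by
    intro k v
    rw [hform0, haQ, mul_zero, zero_add]
  -- assemble
  set c : Fin n → ℝ :=
    fun j => fderiv ℝ (F (j.val + 1) : EE n → ℝ) z ((0 : Fin n → ℝ), (Pi.single 0 1 : Fin n → ℝ))
    with hc
  have hzero : ((0 : Fin n)).val + 1 = 1 := rfl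
  have hc0 : c 0 = 1 := by
    rw [hc]
    show fderiv ℝ (F ((0:Fin n).val + 1) : EE n → ℝ) z _ = 1
    rw [hzero, (hasFDerivAt_F1 hn z).fderiv, sumP_apply, _root_.sum_single_one]
  have hcne : c ≠ 0 := by
    intro h
    have := congrFun h 0
    rw [hc0] at this
    exact one_ne_zero this
  have hΦ : ∀ v : EE n, fderiv ℝ (Fvec' (n := n)) z v = (∑ j : Fin n, v.2 j) • c := by
    intro v
    funext j
    rw [fderiv_Fvec'_apply, hform]
    simp [hc]
  have hrange : LinearMap.range (fderiv ℝ (Fvec' (n := n)) z).toLinearMap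
      = Submodule.span ℝ {c} := by
    apply le_antisymm
    · rintro y ⟨v, rfl⟩
      have : (fderiv ℝ (Fvec' (n := n)) z).toLinearMap v = (∑ j : Fin n, v.2 j) • c := hΦ v
      rw [this]
      exact Submodule.smul_mem _ _ (Submodule.mem_span_singleton_self c)
    · rw [Submodule.span_le, Set.singleton_subset_iff]
      refine ⟨((0 : Fin n → ℝ), (Pi.single 0 1 : Fin n → ℝ)), ?_⟩
      show fderiv ℝ (Fvec' (n := n)) z _ = c
      rw [hΦ, _root_.sum_single_one, one_smul]
  rw [hrange]
  exact finrank_span_singleton hcne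

end Aux6

/-- corank dF(z) = n−1 iff all positions are equal and all momenta
are equal. -/
theorem stmt9 (n : ℕ) [NeZero n] (hn : 2 ≤ n) (z : (Fin n → ℝ) × (Fin n → ℝ)) :
    corank n z = n - 1 ↔
      (∀ i j : Fin n, z.1 i = z.1 j) ∧ (∀ i j : Fin n, z.2 i = z.2 j) := by
  have hFv : (Fvec (n := n)) = (Fvec' (n := n)) := rfl
  constructor
  · intro h
    apply forward_dir hn z
    have hle : Module.finrank ℝ
        (LinearMap.range (fderiv ℝ (Fvec' (n := n)) z).toLinearMap) ≤ n := by
      have h2 := Submodule.finrank_le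
        (LinearMap.range (fderiv ℝ (Fvec' (n := n)) z).toLinearMap)
      rwa [Module.finrank_fin_fun] at h2
    rw [corank, hFv] at h
    omega
  · rintro ⟨hq, hp⟩
    rw [corank, hFv, backward_dir hn z hq hp]
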